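/- For any four pairwise disjoint nonempty subsets I, J, S, T of [n], the quadratic operator identity ψ_{I∪S}∘ψ_{J∪T} + ψ_{I∪J}∘ψ_{S∪T} + ψ_{I∪T}∘ψ_{J∪S} − ψ_I∘ψ_{J∪S∪T} − ψ_J∘ψ_{I∪S∪T} − ψ_S∘ψ_{I∪J∪T} − ψ_T∘ψ_{I∪J∪S} = 0 holds as operators on Λ{Θ_n,Ξ_n}. -/

import Mathlib

open Finset

/-- The index set for the `2n` fermionic generators `θ₁,…,θₙ,ξ₁,…,ξₙ`:
`Sum.inl i` is `θ_i`, `Sum.inr i` is `ξ_i`. -/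
abbrev Gen (n : ℕ) := Fin n ⊕ Fin n

/-- The position of a generator in the fixed order `θ₁ < ⋯ < θₙ < ξ₁ < ⋯ < ξₙ`. -/
def gidx {n : ℕ} : Gen n → ℕ
  | .inl i => (i : ℕ)
  | .inr i => n + (i : ℕ)

/-- The exterior algebra `∧{Θ_n, Ξ_n}` over `ℂ`, modeled by coefficient functions
on the basis of monomials `θ_S · ξ_T`, a monomial being indexed by a subset of the
`2n` generators. -/
abbrev ExtA (n : ℕ) := Finset (Gen n) → ℂ

/-- The basis monomial indexed by a set of generators (product taken in the fixed order). -/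
noncomputable def emon {n : ℕ} (S : Finset (Gen n)) : ExtA n := fun T => if T = S then 1 else 0

/-- The generator `θ_i`. -/
noncomputable def theta {n : ℕ} (i : Fin n) : ExtA n := emon {Sum.inl i}

/-- The generator `ξ_i`. -/
noncomputable def xi {n : ℕ} (i : Fin n) : ExtA n := emon {Sum.inr i}

/-- The sign `(-1)^{#inversions}` obtained when concatenating the sorted monomial on `S`
with the sorted monomial on `T` and re-sorting. -/
noncomputable def msign {n : ℕ} (S T : Finset (Gen n)) : ℂ :=
  (-1 : ℂ) ^ (((S ×ˢ T).filter (fun p => gidx p.2 < gidx p.1)).card)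

/-- Multiplication in the exterior algebra `∧{Θ_n, Ξ_n}`. -/
noncomputable def emul {n : ℕ} (f g : ExtA n) : ExtA n :=
  fun U => ∑ S ∈ U.powerset, msign S (U \ S) * f S * g (U \ S)

/-- The inner product on `∧{Θ_n, Ξ_n}` making the monomials `θ_S · ξ_T` orthonormal. -/
noncomputable def einner {n : ℕ} (f g : ExtA n) : ℂ :=
  ∑ S : Finset (Gen n), f S * g S

/-- The contraction (exterior differentiation) action `f ⊙ h`: on generators,
`ω_i ⊙ (ω_{j_1} ⋯ ω_{j_r})` removes `ω_i` with the sign `(-1)^{s-1}` if `j_s = i`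
and gives `0` otherwise, extended bilinearly (on a monomial `ω_S`, it is the
composite of the single contractions). -/
noncomputable def odot {n : ℕ} (f h : ExtA n) : ExtA n :=
  fun T => ∑ S : Finset (Gen n), if Disjoint S T then msign S T * f S * h (S ∪ T) else 0

/-- The sign produced when the permutation `w` reorders the (sorted) monomial on `S`. -/
noncomputable def actsign {n : ℕ} (w : Equiv.Perm (Fin n)) (S : Finset (Gen n)) : ℂ :=
  (-1 : ℂ) ^ (((S ×ˢ S).filter (fun p =>
      gidx p.1 < gidx p.2 ∧
        gidx (Equiv.sumCongr w w p.2) < gidx (Equiv.sumCongr w w p.1))).card)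

/-- The diagonal action of a permutation `w ∈ S_n` on `∧{Θ_n, Ξ_n}`:
`w · θ_i = θ_{w(i)}`, `w · ξ_i = ξ_{w(i)}`, extended as an algebra automorphism. -/
noncomputable def pact {n : ℕ} (w : Equiv.Perm (Fin n)) (f : ExtA n) : ExtA n :=
  fun T =>
    actsign w (T.map (Equiv.sumCongr w w).symm.toEmbedding) *
      f (T.map (Equiv.sumCongr w w).symm.toEmbedding)

/-- The block operator `ρ_B`: for `|B| > 1`, `ρ_B(f) = ∑_{i ≠ j ∈ B} ξ_i · (θ_j ⊙ f)`;
for `B = {i}`, `ρ_B(f) = ξ_i · (θ_i ⊙ f)`. -/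
noncomputable def rho {n : ℕ} (B : Finset (Fin n)) (f : ExtA n) : ExtA n :=
  if 1 < B.card then
    ∑ i ∈ B, ∑ j ∈ B.erase i, emul (xi i) (odot (theta j) f)
  else
    ∑ i ∈ B, emul (xi i) (odot (theta i) f)

/-- The operator `ψ_B`, equal to `ρ_B` when `|B| > 1` and `0` when `|B| ≤ 1`. -/
noncomputable def psi {n : ℕ} (B : Finset (Fin n)) (f : ExtA n) : ExtA n :=
  if 1 < B.card then rho B f else 0

/-- The two-set operator `ψ_{A,B}(f) = ∑_{a ∈ A, b ∈ B} [ξ_a·(θ_b ⊙ f) + ξ_b·(θ_a ⊙ f)]`. -/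
noncomputable def psiPair {n : ℕ} (A B : Finset (Fin n)) (f : ExtA n) : ExtA n :=
  ∑ a ∈ A, ∑ b ∈ B, (emul (xi a) (odot (theta b) f) + emul (xi b) (odot (theta a) f))

/-- A set partition of `[n]` is noncrossing if whenever `a < b < c < d` with `a,c` in a
block `B` and `b,d` in a block `C`, then `B = C`. -/
def Noncrossing {n : ℕ} (π : Finpartition (Finset.univ : Finset (Fin n))) : Prop :=
  ∀ B ∈ π.parts, ∀ C ∈ π.parts, ∀ a b c d : Fin n,
    a < b → b < c → c < d → a ∈ B → c ∈ B → b ∈ C → d ∈ C → B = C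

/-- The composite operator `ρ_π = ρ_{B_1} ∘ ⋯ ∘ ρ_{B_k}` over the blocks of `π`
(the order of composition is immaterial since block operators commute). -/
noncomputable def rhoPartition {n : ℕ} (π : Finpartition (Finset.univ : Finset (Fin n))) :
    ExtA n → ExtA n :=
  π.parts.toList.foldr (fun B g => rho B ∘ g) id

/-- The top monomial `θ_1 θ_2 ⋯ θ_n`. -/
noncomputable def topTheta (n : ℕ) : ExtA n :=
  emon ((Finset.univ : Finset (Fin n)).image Sum.inl)

/-- The fermion `F_π := ρ_π(θ_1 θ_2 ⋯ θ_n)` attached to a set partition `π` of `[n]`. -/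
noncomputable def Fperm {n : ℕ} (π : Finpartition (Finset.univ : Finset (Fin n))) : ExtA n :=
  rhoPartition π (topTheta n)

/-- The fermion `f_π := (ξ_1 + ⋯ + ξ_n) ⊙ F_π`. -/
noncomputable def fperm {n : ℕ} (π : Finpartition (Finset.univ : Finset (Fin n))) : ExtA n :=
  odot (∑ i : Fin n, xi i) (Fperm π)
section Aux
variable {n : ℕ}

lemma gidx_inj : Function.Injective (gidx (n := n)) := by
  rintro (i | i) (j | j) h <;> simp [gidx] at h <;>
    first
      | (exact congrArg Sum.inl (Fin.ext h))
      | (exact congrArg Sum.inr (Fin.ext (by omega)))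
      | (exact absurd h (by omega))
      | (exact absurd h (by have := i.isLt; have := j.isLt; omega))

/-- auxiliary sign -/
noncomputable def mu (x : Gen n) (V : Finset (Gen n)) : ℂ :=
  (-1 : ℂ) ^ ((V.filter fun t => gidx t < gidx x).card)

lemma msign_single (x : Gen n) (V : Finset (Gen n)) : msign {x} V = mu x V := by
  unfold msign mu
  congr 1
  rw [Finset.singleton_product, Finset.filter_map, Finset.card_map]
  rfl

lemma mu_insert (x y : Gen n) (V : Finset (Gen n)) (h : y ∉ V) :
    mu x (insert y V) = (if gidx y < gidx x then -1 else 1) * mu x V := by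
  unfold mu
  rw [Finset.filter_insert]
  split_ifs with h1
  · rw [Finset.card_insert_of_notMem (by simp [h]), pow_succ]
    ring
  · ring

lemma mu_erase (x y : Gen n) (V : Finset (Gen n)) (h : y ∈ V) :
    mu x V = (if gidx y < gidx x then -1 else 1) * mu x (V.erase y) := by
  conv_lhs => rw [← Finset.insert_erase h]
  rw [mu_insert x y _ (Finset.notMem_erase _ _)]

end Aux
section Aux2
variable {n : ℕ}

lemma odot_theta_apply (b : Fin n) (f : ExtA n) (T : Finset (Gen n)) :
    odot (theta b) f T =
      if Sum.inl b ∈ T then 0 else mu (Sum.inl b) T * f (insert (Sum.inl b) T) := by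
  unfold odot theta emon
  rw [Finset.sum_eq_single ({Sum.inl b} : Finset (Gen n))]
  · rw [msign_single]
    by_cases h : Sum.inl b ∈ T
    · simp [h, Finset.disjoint_singleton_left]
    · simp [h, Finset.disjoint_singleton_left]
  · intro s _ hs
    split_ifs <;> simp [hs]
  · simp

lemma emul_xi_apply (a : Fin n) (g : ExtA n) (U : Finset (Gen n)) :
    emul (xi a) g U =
      if Sum.inr a ∈ U then
        mu (Sum.inr a) (U.erase (Sum.inr a)) * g (U.erase (Sum.inr a))
      else 0 := by
  unfold emul xi emon
  by_cases h : Sum.inr a ∈ U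
  · rw [Finset.sum_eq_single_of_mem ({Sum.inr a} : Finset (Gen n))
      (by simpa [Finset.mem_powerset, Finset.singleton_subset_iff] using h)]
    · simp [h, msign_single, ← Finset.erase_eq]
    · intro s _ hs
      simp [hs]
  · rw [Finset.sum_eq_zero, if_neg h]
    intro s hs
    rcases eq_or_ne s ({Sum.inr a} : Finset (Gen n)) with rfl | hne
    · exact absurd (Finset.singleton_subset_iff.mp (Finset.mem_powerset.mp hs)) h
    · simp [hne]

end Aux2
section Aux3
variable {n : ℕ}

lemma ann_ann (b d : Fin n) (f : ExtA n) :
    odot (theta b) (odot (theta d) f) = -(odot (theta d) (odot (theta b) f)) := by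
  funext T
  simp only [Pi.neg_apply, odot_theta_apply]
  rcases eq_or_ne b d with rfl | hbd
  · simp
  · have hne : (Sum.inl b : Gen n) ≠ Sum.inl d := by simpa using hbd
    by_cases hb : (Sum.inl b : Gen n) ∈ T <;> by_cases hd : (Sum.inl d : Gen n) ∈ T
    · simp [hb, hd]
    · simp [hb, hd, Finset.mem_insert, hne.symm]
    · simp [hb, hd, Finset.mem_insert, hne]
    · simp only [hb, hd, if_neg, Finset.mem_insert, hne, hne.symm, false_or, if_false]
      rw [mu_insert _ _ _ hb, mu_insert _ _ _ hd, Finset.insert_comm]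
      have hg : gidx (Sum.inl b : Gen n) ≠ gidx (Sum.inl d : Gen n) := fun h => hne (gidx_inj h)
      rcases lt_or_gt_of_ne hg with h | h
      · rw [if_pos h, if_neg (asymm h)]; ring
      · rw [if_neg (asymm h), if_pos h]; ring

lemma cre_cre (a c : Fin n) (g : ExtA n) :
    emul (xi a) (emul (xi c) g) = -(emul (xi c) (emul (xi a) g)) := by
  funext U
  simp only [Pi.neg_apply, emul_xi_apply]
  rcases eq_or_ne a c with rfl | hac
  · simp
  · have hne : (Sum.inr a : Gen n) ≠ Sum.inr c := by simpa using hac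
    by_cases ha : (Sum.inr a : Gen n) ∈ U <;> by_cases hc : (Sum.inr c : Gen n) ∈ U
    · simp only [ha, hc, if_pos, Finset.mem_erase, hne, hne.symm, and_true,
        ne_eq, not_false_iff, if_true]
      rw [Finset.erase_right_comm (a := Sum.inr a)]
      rw [mu_erase (Sum.inr a) (Sum.inr c) (U.erase (Sum.inr a))
            (Finset.mem_erase.mpr ⟨hne.symm, hc⟩),
          mu_erase (Sum.inr c) (Sum.inr a) (U.erase (Sum.inr c))
            (Finset.mem_erase.mpr ⟨hne, ha⟩),
          Finset.erase_right_comm (a := Sum.inr a)]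
      have hg : gidx (Sum.inr a : Gen n) ≠ gidx (Sum.inr c : Gen n) := fun h => hne (gidx_inj h)
      rcases lt_or_gt_of_ne hg with h | h
      · rw [if_neg (asymm h), if_pos h]; ring
      · rw [if_pos h, if_neg (asymm h)]; ring
    · simp [ha, hc, Finset.mem_erase, hne]
    · simp [ha, hc, Finset.mem_erase, hne.symm]
    · simp [ha, hc]

lemma ann_cre (b a : Fin n) (f : ExtA n) :
    odot (theta b) (emul (xi a) f) = -(emul (xi a) (odot (theta b) f)) := by
  funext T
  simp only [Pi.neg_apply, odot_theta_apply, emul_xi_apply]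
  have hne : (Sum.inl b : Gen n) ≠ Sum.inr a := by simp
  have hgba : gidx (Sum.inl b : Gen n) < gidx (Sum.inr a : Gen n) := by
    simp only [gidx]; have := b.isLt; omega
  by_cases hb : (Sum.inl b : Gen n) ∈ T <;> by_cases ha : (Sum.inr a : Gen n) ∈ T
  · simp [hb, ha, Finset.mem_erase, hne]
  · simp [hb, ha, Finset.mem_insert, hne.symm]
  · simp only [hb, ha, if_neg, if_pos, Finset.mem_insert, hne.symm, false_or,
      Finset.mem_erase, hne, ne_eq, not_false_iff, and_true, if_true, if_false]
    rw [Finset.erase_insert_of_ne hne,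
        mu_insert (Sum.inr a) (Sum.inl b) _ (fun h => hb (Finset.mem_of_mem_erase h)),
        mu_erase (Sum.inl b) (Sum.inr a) T ha,
        if_pos hgba, if_neg (not_lt_of_gt hgba),
        if_neg (by simp [Finset.mem_erase, hb])]
    ring
  · simp [hb, ha, Finset.mem_insert, hne.symm]

lemma emul_xi_neg (a : Fin n) (h : ExtA n) : emul (xi a) (-h) = -emul (xi a) h := by
  funext U
  simp only [Pi.neg_apply, emul_xi_apply]
  split_ifs <;> ring

end Aux3
section Aux4
variable {n : ℕ}

/-- The operator `f ↦ ξ_a · (θ_b ⊙ f)` as an additive endomorphism. -/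
noncomputable def Eop (a b : Fin n) : AddMonoid.End (ExtA n) :=
  AddMonoidHom.mk' (fun f => emul (xi a) (odot (theta b) f)) (by
    intro f g
    funext U
    simp only [Pi.add_apply, emul_xi_apply, odot_theta_apply]
    split_ifs <;> ring)

lemma Eop_apply (a b : Fin n) (f : ExtA n) :
    Eop a b f = emul (xi a) (odot (theta b) f) := rfl

lemma E_reassoc (a b c d : Fin n) (f : ExtA n) :
    emul (xi a) (odot (theta b) (emul (xi c) (odot (theta d) f))) =
      emul (xi c) (emul (xi a) (odot (theta b) (odot (theta d) f))) := by
  rw [ann_cre, emul_xi_neg, cre_cre, neg_neg]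

lemma Eop_comm (a b c d : Fin n) : Eop a b * Eop c d = Eop c d * Eop a b := by
  refine AddMonoidHom.ext fun f => ?_
  show Eop a b (Eop c d f) = Eop c d (Eop a b f)
  simp only [Eop_apply]
  rw [E_reassoc, E_reassoc, cre_cre, ann_ann, emul_xi_neg, emul_xi_neg, neg_neg]

lemma Eop_swap (a b c d : Fin n) : Eop a b * Eop c d = -(Eop a d * Eop c b) := by
  refine AddMonoidHom.ext fun f => ?_
  show Eop a b (Eop c d f) = (-(Eop a d * Eop c b)) f
  have : (-(Eop a d * Eop c b)) f = -(Eop a d (Eop c b f)) := rfl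
  rw [this]
  simp only [Eop_apply]
  rw [E_reassoc, E_reassoc, ann_ann, emul_xi_neg, emul_xi_neg]

end Aux4
section Aux5
variable {n : ℕ}

noncomputable def Dop (B : Finset (Fin n)) : AddMonoid.End (ExtA n) :=
  ∑ i ∈ B, ∑ j ∈ B.erase i, Eop i j

noncomputable def Pop (A B : Finset (Fin n)) : AddMonoid.End (ExtA n) :=
  ∑ a ∈ A, ∑ b ∈ B, (Eop a b + Eop b a)

lemma psi_eq_Dop (B : Finset (Fin n)) (f : ExtA n) : psi B f = Dop B f := by
  unfold psi Dop
  erw [AddMonoidHom.finset_sum_apply]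
  by_cases h : 1 < B.card
  · rw [if_pos h]
    unfold rho
    rw [if_pos h]
    refine Finset.sum_congr rfl fun i hi => ?_
    erw [AddMonoidHom.finset_sum_apply]
    exact Finset.sum_congr rfl fun j _ => rfl
  · rw [if_neg h]
    symm
    refine Finset.sum_eq_zero fun i hi => ?_
    have he : B.erase i = ∅ := Finset.card_eq_zero.mp (by
      rw [Finset.card_erase_of_mem hi]
      have := Finset.card_pos.mpr ⟨i, hi⟩
      omega)
    rw [he]
    simp
    rfl

end Aux5
section Aux6
variable {n : ℕ}

lemma Dop_union {A B : Finset (Fin n)} (h : Disjoint A B) :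
    Dop (A ∪ B) = Dop A + Dop B + Pop A B := by
  have hA : ∀ i ∈ A, ((A ∪ B).erase i) = (A.erase i) ∪ B := by
    intro i hi
    ext x
    have hxB : x ∈ B → x ≠ i := fun hx hxi => Finset.disjoint_left.mp h hi (hxi ▸ hx)
    simp only [Finset.mem_erase, Finset.mem_union]
    tauto
  have hB : ∀ i ∈ B, ((A ∪ B).erase i) = A ∪ (B.erase i) := by
    intro i hi
    ext x
    have hxA : x ∈ A → x ≠ i := fun hx hxi => Finset.disjoint_right.mp h hi (hxi ▸ hx)
    simp only [Finset.mem_erase, Finset.mem_union]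
    tauto
  unfold Dop Pop
  have e1 : ∑ i ∈ A, ∑ j ∈ (A ∪ B).erase i, Eop (n := n) i j
      = ∑ i ∈ A, (∑ j ∈ A.erase i, Eop i j + ∑ j ∈ B, Eop i j) :=
    Finset.sum_congr rfl fun i hi => by
      rw [hA i hi,
        Finset.sum_union (Finset.disjoint_of_subset_left (Finset.erase_subset i A) h)]
  have e2 : ∑ i ∈ B, ∑ j ∈ (A ∪ B).erase i, Eop (n := n) i j
      = ∑ i ∈ B, (∑ j ∈ A, Eop i j + ∑ j ∈ B.erase i, Eop i j) :=
    Finset.sum_congr rfl fun i hi => by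
      rw [hB i hi,
        Finset.sum_union (Finset.disjoint_of_subset_right (Finset.erase_subset i B) h)]
  rw [Finset.sum_union h, e1, e2]
  simp only [Finset.sum_add_distrib]
  rw [Finset.sum_comm (s := B) (t := A) (f := fun i j => Eop i j)]
  abel

lemma Pop_union_left {A B C : Finset (Fin n)} (h : Disjoint A B) :
    Pop (A ∪ B) C = Pop A C + Pop B C := by
  unfold Pop
  rw [Finset.sum_union h]

end Aux6
section Aux7
variable {n : ℕ}

lemma End_mul_apply (f g : AddMonoid.End (ExtA n)) (x : ExtA n) : (f * g) x = f (g x) := rfl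

lemma commute_EE (a b c d : Fin n) : Commute (Eop a b) (Eop c d) := Eop_comm a b c d

lemma commute_DD (A B : Finset (Fin n)) : Commute (Dop A) (Dop B) :=
  Commute.sum_left _ _ _ fun i _ => Commute.sum_left _ _ _ fun j _ =>
    Commute.sum_right _ _ _ fun k _ => Commute.sum_right _ _ _ fun l _ => commute_EE i j k l

lemma commute_PD (A B C : Finset (Fin n)) : Commute (Pop A B) (Dop C) :=
  Commute.sum_left _ _ _ fun a _ => Commute.sum_left _ _ _ fun b _ =>
    Commute.sum_right _ _ _ fun k _ => Commute.sum_right _ _ _ fun l _ =>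
      ((commute_EE a b k l).add_left (commute_EE b a k l))

lemma quad_term (i j s t : Fin n) :
    (Eop i s + Eop s i) * (Eop j t + Eop t j) + (Eop i j + Eop j i) * (Eop s t + Eop t s)
      + (Eop i t + Eop t i) * (Eop j s + Eop s j) = 0 := by
  simp only [add_mul, mul_add]
  rw [Eop_swap i s j t, Eop_swap i s t j, Eop_swap s i t j, Eop_swap i j s t,
      Eop_swap j i s t, Eop_swap j i t s, Eop_comm t i s j, Eop_comm s i j t, Eop_comm t i j s]
  abel

lemma Pop_mul_expand (A B C D : Finset (Fin n)) :
    Pop A B * Pop C D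
      = ∑ a ∈ A, ∑ c ∈ C, ∑ b ∈ B, ∑ d ∈ D,
          ((Eop a b + Eop b a) * (Eop c d + Eop d c)) := by
  unfold Pop
  rw [Finset.sum_mul_sum]
  exact Finset.sum_congr rfl fun a _ => Finset.sum_congr rfl fun c _ =>
    Finset.sum_mul_sum _ _ _ _

lemma Pop_quad (I J S T : Finset (Fin n)) :
    Pop I S * Pop J T + Pop I J * Pop S T + Pop I T * Pop J S = 0 := by
  have A1 : Pop I S * Pop J T
      = ∑ i ∈ I, ∑ j ∈ J, ∑ s ∈ S, ∑ t ∈ T,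
          ((Eop i s + Eop s i) * (Eop j t + Eop t j)) := Pop_mul_expand I S J T
  have A2 : Pop I J * Pop S T
      = ∑ i ∈ I, ∑ j ∈ J, ∑ s ∈ S, ∑ t ∈ T,
          ((Eop i j + Eop j i) * (Eop s t + Eop t s)) := by
    rw [Pop_mul_expand I J S T]
    exact Finset.sum_congr rfl fun i _ => Finset.sum_comm
  have A3 : Pop I T * Pop J S
      = ∑ i ∈ I, ∑ j ∈ J, ∑ s ∈ S, ∑ t ∈ T,
          ((Eop i t + Eop t i) * (Eop j s + Eop s j)) := by
    rw [Pop_mul_expand I T J S]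
    exact Finset.sum_congr rfl fun i _ => Finset.sum_congr rfl fun j _ => Finset.sum_comm
  rw [A1, A2, A3]
  simp only [← Finset.sum_add_distrib]
  exact Finset.sum_eq_zero fun i _ => Finset.sum_eq_zero fun j _ =>
    Finset.sum_eq_zero fun s _ => Finset.sum_eq_zero fun t _ => quad_term i j s t

end Aux7
/-- The quadratic operator identity: for four pairwise disjoint nonempty subsets
`I, J, S, T` of `[n]`,
`ψ_{I∪S}∘ψ_{J∪T} + ψ_{I∪J}∘ψ_{S∪T} + ψ_{I∪T}∘ψ_{J∪S} − ψ_I∘ψ_{J∪S∪T} − ψ_J∘ψ_{I∪S∪T}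
 − ψ_S∘ψ_{I∪J∪T} − ψ_T∘ψ_{I∪J∪S} = 0`. -/
theorem psi_quadratic (n : ℕ) (I J S T : Finset (Fin n))
    (hI : I.Nonempty) (hJ : J.Nonempty) (hS : S.Nonempty) (hT : T.Nonempty)
    (hIJ : Disjoint I J) (hIS : Disjoint I S) (hIT : Disjoint I T)
    (hJS : Disjoint J S) (hJT : Disjoint J T) (hST : Disjoint S T) (f : ExtA n) :
    psi (I ∪ S) (psi (J ∪ T) f) + psi (I ∪ J) (psi (S ∪ T) f) + psi (I ∪ T) (psi (J ∪ S) f)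
      - psi I (psi (J ∪ S ∪ T) f) - psi J (psi (I ∪ S ∪ T) f)
      - psi S (psi (I ∪ J ∪ T) f) - psi T (psi (I ∪ J ∪ S) f) = 0 := by
  have dJS_T : Disjoint (J ∪ S) T := Finset.disjoint_union_left.mpr ⟨hJT, hST⟩
  have dIS_T : Disjoint (I ∪ S) T := Finset.disjoint_union_left.mpr ⟨hIT, hST⟩
  have dIJ_T : Disjoint (I ∪ J) T := Finset.disjoint_union_left.mpr ⟨hIT, hJT⟩
  have dIJ_S : Disjoint (I ∪ J) S := Finset.disjoint_union_left.mpr ⟨hIS, hJS⟩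
  have E0 : Dop (I ∪ S) * Dop (J ∪ T) + Dop (I ∪ J) * Dop (S ∪ T) + Dop (I ∪ T) * Dop (J ∪ S)
      - Dop I * Dop (J ∪ S ∪ T) - Dop J * Dop (I ∪ S ∪ T)
      - Dop S * Dop (I ∪ J ∪ T) - Dop T * Dop (I ∪ J ∪ S) = (0 : AddMonoid.End (ExtA n)) := by
    rw [Dop_union hIS, Dop_union hJT, Dop_union hIJ, Dop_union hST, Dop_union hIT,
        Dop_union hJS,
        Dop_union dJS_T, Dop_union hJS, Pop_union_left hJS,
        Dop_union dIS_T, Dop_union hIS, Pop_union_left hIS,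
        Dop_union dIJ_T, Dop_union hIJ, Pop_union_left hIJ,
        Dop_union dIJ_S, Dop_union hIJ, Pop_union_left hIJ]
    have hba : Dop J * Dop I = Dop I * Dop J := (commute_DD J I).eq
    have hca : Dop S * Dop I = Dop I * Dop S := (commute_DD S I).eq
    have hda : Dop T * Dop I = Dop I * Dop T := (commute_DD T I).eq
    have hp1b : Pop I S * Dop J = Dop J * Pop I S := (commute_PD I S J).eq
    have hp1d : Pop I S * Dop T = Dop T * Pop I S := (commute_PD I S T).eq
    have hp3c : Pop I J * Dop S = Dop S * Pop I J := (commute_PD I J S).eq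
    have hp3d : Pop I J * Dop T = Dop T * Pop I J := (commute_PD I J T).eq
    have hp5b : Pop I T * Dop J = Dop J * Pop I T := (commute_PD I T J).eq
    have hp5c : Pop I T * Dop S = Dop S * Pop I T := (commute_PD I T S).eq
    have q := Pop_quad I J S T
    simp only [mul_add, add_mul]
    rw [hba, hca, hda, hp1b, hp1d, hp3c, hp3d, hp5b, hp5c, ← q]
    abel
  have := congrArg (fun (g : AddMonoid.End (ExtA n)) => g f) E0
  erw [AddMonoidHom.sub_apply, AddMonoidHom.sub_apply, AddMonoidHom.sub_apply, AddMonoidHom.sub_apply,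
    AddMonoidHom.add_apply, AddMonoidHom.add_apply] at this
  simp only [End_mul_apply, AddMonoid.End.zero_apply] at this
  simp only [psi_eq_Dop]
  exact this
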